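/- Let τ > 0, θ ∈ ℝ, δ > 0, W̄ > 0, n ∈ ℕ, and let D ⊆ ℝ^n × ℝ^n be the set of pairs (t, W) such that t_j ≥ 0 and |W_j| ≤ W̄ for all j, ∑_j W_j · exp(t_j/τ) > 0, ∑_j W_j − θ ≥ δ, and t_j ≤ T(t,W) for all j, where T(t,W) := τ · log((∑_j W_j · exp(t_j/τ)) / (∑_j W_j − θ)). Then for all a, b ∈ D such that the line segment joining a and b is contained in D, |T(a) − T(b)| ≤ 2n · max(W̄/δ, τ/δ) · ‖a − b‖_∞, where ‖·‖_∞ is the supremum norm over all 2n coordinates. -/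

import Mathlib

open Real Finset

/-- The nLIF output spike time as a function of the pair (input spike times, weights). -/
noncomputable def nLIFSpikeTime (τ θ : ℝ) {n : ℕ} (p : (Fin n → ℝ) × (Fin n → ℝ)) : ℝ :=
  τ * Real.log ((∑ j, p.2 j * Real.exp (p.1 j / τ)) / ((∑ j, p.2 j) - θ))

/-- **Theorem 1 of the paper.** On the causal-piece domain `D` (input times
nonnegative, weights bounded by `W̄`, positive numerator, weight sum exceeding the threshold
by at least `δ`, and all inputs preceding the output spike), the output spike time is
Lipschitz with constant `2n * max (W̄/δ) (τ/δ)` with respect to the sup norm on the `2n`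
coordinates, along segments contained in `D`.  Here the norm on
`(Fin n → ℝ) × (Fin n → ℝ)` is the sup norm over all `2n` coordinates. -/
theorem nLIF_spike_time_lipschitz_on_causal_piece
    (τ θ δ Wbar : ℝ) (hτ : 0 < τ) (hδ : 0 < δ) (hWbar : 0 < Wbar) (n : ℕ)
    (D : Set ((Fin n → ℝ) × (Fin n → ℝ)))
    (hD : D = {p : (Fin n → ℝ) × (Fin n → ℝ) |
      (∀ j, 0 ≤ p.1 j) ∧ (∀ j, |p.2 j| ≤ Wbar) ∧
      (0 < ∑ j, p.2 j * Real.exp (p.1 j / τ)) ∧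
      (δ ≤ (∑ j, p.2 j) - θ) ∧
      (∀ j, p.1 j ≤ nLIFSpikeTime τ θ p)})
    (a b : (Fin n → ℝ) × (Fin n → ℝ)) (ha : a ∈ D) (hb : b ∈ D)
    (hseg : segment ℝ a b ⊆ D) :
    |nLIFSpikeTime τ θ a - nLIFSpikeTime τ θ b|
      ≤ 2 * n * max (Wbar / δ) (τ / δ) * ‖a - b‖ := by
  set Δt : Fin n → ℝ := fun j => b.1 j - a.1 j with hΔt
  set ΔW : Fin n → ℝ := fun j => b.2 j - a.2 j with hΔW
  set tf : ℝ → Fin n → ℝ := fun s j => a.1 j + s * Δt j with htf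
  set Wf : ℝ → Fin n → ℝ := fun s j => a.2 j + s * ΔW j with hWf
  set E : ℝ → Fin n → ℝ := fun s j => Real.exp (tf s j / τ) with hE
  set N : ℝ → ℝ := fun s => ∑ j, Wf s j * E s j with hN
  set M : ℝ → ℝ := fun s => (∑ j, Wf s j) - θ with hM
  set g : ℝ → ℝ := fun s => τ * (Real.log (N s) - Real.log (M s)) with hg
  set G : ℝ → ℝ := fun s =>
    ∑ j, (Δt j * (Wf s j * E s j / N s) + ΔW j * (τ * E s j / N s - τ / M s)) with hG
  set C : ℝ := 2 * n * max (Wbar / δ) (τ / δ) * ‖a - b‖ with hC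
  -- membership of points on the segment
  have hmem : ∀ s ∈ Set.Icc (0:ℝ) 1, ((tf s, Wf s) : (Fin n → ℝ) × (Fin n → ℝ)) ∈ D := by
    intro s hs
    apply hseg
    rw [segment_eq_image']
    exact ⟨s, hs, by refine Prod.ext ?_ ?_ <;> funext j <;> simp [tf, Wf, Δt, ΔW]⟩
  -- basic facts at each point of the segment
  have key : ∀ s ∈ Set.Icc (0:ℝ) 1,
      0 < N s ∧ δ ≤ M s ∧ (∀ j, |Wf s j| ≤ Wbar) ∧ (∀ j, E s j ≤ N s / M s) := by
    intro s hs
    have hm := hmem s hs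
    rw [hD] at hm
    obtain ⟨h1, h2, h3, h4, h5⟩ := hm
    have hNpos : 0 < N s := h3
    have hMδ : δ ≤ M s := h4
    have hMpos : 0 < M s := lt_of_lt_of_le hδ hMδ
    refine ⟨hNpos, hMδ, h2, fun j => ?_⟩
    have h5j : tf s j ≤ τ * Real.log (N s / M s) := h5 j
    have : tf s j / τ ≤ Real.log (N s / M s) := by
      rw [div_le_iff₀ hτ]; linarith [h5j, mul_comm τ (Real.log (N s / M s))]
    calc E s j = Real.exp (tf s j / τ) := rfl
      _ ≤ Real.exp (Real.log (N s / M s)) := Real.exp_le_exp.mpr this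
      _ = N s / M s := Real.exp_log (div_pos hNpos hMpos)
  -- derivative
  have hderiv : ∀ s ∈ Set.Icc (0:ℝ) 1, HasDerivWithinAt g (G s) (Set.Icc (0:ℝ) 1) s := by
    intro s hs
    obtain ⟨hNpos, hMδ, _, _⟩ := key s hs
    have hMpos : 0 < M s := lt_of_lt_of_le hδ hMδ
    have hWd : ∀ j, HasDerivAt (fun u => Wf u j) (ΔW j) s := by
      intro j
      simpa [Wf] using ((hasDerivAt_id s).mul_const (ΔW j)).const_add (a.2 j)
    have hEd : ∀ j, HasDerivAt (fun u => E u j) (E s j * (Δt j / τ)) s := by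
      intro j
      have h1 : HasDerivAt (fun u => tf u j / τ) (Δt j / τ) s := by
        have : HasDerivAt (fun u => tf u j) (Δt j) s := by
          simpa [tf] using ((hasDerivAt_id s).mul_const (Δt j)).const_add (a.1 j)
        exact this.div_const τ
      exact h1.exp
    have hNd : HasDerivAt N
        (∑ j, (ΔW j * E s j + Wf s j * (E s j * (Δt j / τ)))) s :=
      HasDerivAt.fun_sum (fun j _ => (hWd j).fun_mul (hEd j))
    have hMd : HasDerivAt M (∑ j, ΔW j) s :=
      ((HasDerivAt.fun_sum (fun j _ => hWd j)).sub_const θ)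
    have hgd : HasDerivAt g
        (τ * ((∑ j, (ΔW j * E s j + Wf s j * (E s j * (Δt j / τ)))) / N s
          - (∑ j, ΔW j) / M s)) s :=
      ((hNd.log hNpos.ne').sub (hMd.log hMpos.ne')).const_mul τ
    have heq : τ * ((∑ j, (ΔW j * E s j + Wf s j * (E s j * (Δt j / τ)))) / N s
          - (∑ j, ΔW j) / M s) = G s := by
      have e1 : τ * ((∑ j, (ΔW j * E s j + Wf s j * (E s j * (Δt j / τ)))) / N s)
          = ∑ j, τ * ((ΔW j * E s j + Wf s j * (E s j * (Δt j / τ))) / N s) := by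
        rw [Finset.sum_div, Finset.mul_sum]
      have e2 : τ * ((∑ j, ΔW j) / M s) = ∑ j, τ * (ΔW j / M s) := by
        rw [Finset.sum_div, Finset.mul_sum]
      rw [mul_sub, e1, e2, ← Finset.sum_sub_distrib]
      simp only [hG]
      refine Finset.sum_congr rfl fun j _ => ?_
      field_simp
      ring
    exact (heq ▸ hgd).hasDerivWithinAt
  -- coordinate bound
  have hcoord : ∀ j, |Δt j| ≤ ‖a - b‖ ∧ |ΔW j| ≤ ‖a - b‖ := by
    intro j
    constructor
    · have h1 : |Δt j| = ‖(a - b).1 j‖ := by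
        simp [Δt, Real.norm_eq_abs, abs_sub_comm]
      rw [h1]
      exact le_trans (norm_le_pi_norm _ j) (norm_fst_le _)
    · have h1 : |ΔW j| = ‖(a - b).2 j‖ := by
        simp [ΔW, Real.norm_eq_abs, abs_sub_comm]
      rw [h1]
      exact le_trans (norm_le_pi_norm _ j) (norm_snd_le _)
  -- bound on the derivative
  have hbound : ∀ s ∈ Set.Ico (0:ℝ) 1, ‖G s‖ ≤ C := by
    intro s hs
    obtain ⟨hNpos, hMδ, hWb, hEb⟩ := key s (Set.Ico_subset_Icc_self hs)
    have hMpos : 0 < M s := lt_of_lt_of_le hδ hMδ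
    have hterm : ∀ j, |Δt j * (Wf s j * E s j / N s) + ΔW j * (τ * E s j / N s - τ / M s)|
        ≤ ‖a - b‖ * (Wbar / δ) + ‖a - b‖ * (τ / δ) := by
      intro j
      have hEpos : 0 < E s j := Real.exp_pos _
      have hENM : E s j / N s ≤ 1 / M s := by
        rw [div_le_div_iff₀ hNpos hMpos]
        have := hEb j
        calc E s j * M s ≤ (N s / M s) * M s := by
              exact mul_le_mul_of_nonneg_right this hMpos.le
          _ = N s := by field_simp
          _ = 1 * N s := (one_mul _).symm
      have h1 : |Wf s j * E s j / N s| ≤ Wbar / δ := by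
        rw [abs_div, abs_mul, abs_of_pos hEpos, abs_of_pos hNpos]
        calc |Wf s j| * E s j / N s = |Wf s j| * (E s j / N s) := by ring
          _ ≤ Wbar * (1 / M s) := by
              apply mul_le_mul (hWb j) hENM (by positivity) hWbar.le
          _ ≤ Wbar * (1 / δ) := by
              apply mul_le_mul_of_nonneg_left _ hWbar.le
              apply one_div_le_one_div_of_le hδ hMδ
          _ = Wbar / δ := by ring
      have h2 : |τ * E s j / N s - τ / M s| ≤ τ / δ := by
        have hx0 : 0 ≤ τ * E s j / N s := by positivity
        have hxM : τ * E s j / N s ≤ τ / M s := by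
          rw [mul_div_assoc]
          calc τ * (E s j / N s) ≤ τ * (1 / M s) :=
                mul_le_mul_of_nonneg_left hENM hτ.le
            _ = τ / M s := by ring
        have hMδ' : τ / M s ≤ τ / δ := div_le_div_of_nonneg_left hτ.le hδ hMδ
        rw [abs_sub_le_iff]
        constructor
        · linarith [div_nonneg hτ.le hMpos.le]
        · linarith
      calc |Δt j * (Wf s j * E s j / N s) + ΔW j * (τ * E s j / N s - τ / M s)|
          ≤ |Δt j * (Wf s j * E s j / N s)| + |ΔW j * (τ * E s j / N s - τ / M s)| :=
            abs_add_le _ _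
        _ = |Δt j| * |Wf s j * E s j / N s| + |ΔW j| * |τ * E s j / N s - τ / M s| := by
            rw [abs_mul, abs_mul]
        _ ≤ ‖a - b‖ * (Wbar / δ) + ‖a - b‖ * (τ / δ) := by
            apply add_le_add
            · exact mul_le_mul (hcoord j).1 h1 (abs_nonneg _) (norm_nonneg _)
            · exact mul_le_mul (hcoord j).2 h2 (abs_nonneg _) (norm_nonneg _)
    have hmax1 : Wbar / δ ≤ max (Wbar / δ) (τ / δ) := le_max_left _ _
    have hmax2 : τ / δ ≤ max (Wbar / δ) (τ / δ) := le_max_right _ _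
    calc ‖G s‖ = |G s| := rfl
      _ ≤ ∑ j, |Δt j * (Wf s j * E s j / N s) + ΔW j * (τ * E s j / N s - τ / M s)| :=
          Finset.abs_sum_le_sum_abs _ _
      _ ≤ ∑ _j : Fin n, (‖a - b‖ * (Wbar / δ) + ‖a - b‖ * (τ / δ)) :=
          Finset.sum_le_sum fun j _ => hterm j
      _ = n * (‖a - b‖ * (Wbar / δ) + ‖a - b‖ * (τ / δ)) := by
          rw [Finset.sum_const, Finset.card_univ, Fintype.card_fin, nsmul_eq_mul]
      _ ≤ n * (‖a - b‖ * max (Wbar / δ) (τ / δ) + ‖a - b‖ * max (Wbar / δ) (τ / δ)) := by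
          apply mul_le_mul_of_nonneg_left _ (Nat.cast_nonneg n)
          apply add_le_add <;>
            exact mul_le_mul_of_nonneg_left (by first | exact hmax1 | exact hmax2)
              (norm_nonneg _)
      _ = C := by rw [hC]; ring
  -- conclude via the mean value inequality
  have hMVT := norm_image_sub_le_of_norm_deriv_le_segment' hderiv hbound 1
    (Set.right_mem_Icc.2 zero_le_one)
  have hg0 : g 0 = nLIFSpikeTime τ θ a := by
    obtain ⟨hNpos, hMδ, _, _⟩ := key 0 (by norm_num)
    have hMpos : 0 < M 0 := lt_of_lt_of_le hδ hMδ
    have hN0 : N 0 = ∑ j, a.2 j * Real.exp (a.1 j / τ) := by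
      simp [N, Wf, E, tf]
    have hM0 : M 0 = (∑ j, a.2 j) - θ := by simp [M, Wf]
    rw [hg, nLIFSpikeTime, ← hN0, ← hM0, Real.log_div hNpos.ne' hMpos.ne']
  have hg1 : g 1 = nLIFSpikeTime τ θ b := by
    obtain ⟨hNpos, hMδ, _, _⟩ := key 1 (by norm_num)
    have hMpos : 0 < M 1 := lt_of_lt_of_le hδ hMδ
    have hN1 : N 1 = ∑ j, b.2 j * Real.exp (b.1 j / τ) := by
      simp [N, Wf, E, tf, Δt, ΔW]
    have hM1 : M 1 = (∑ j, b.2 j) - θ := by simp [M, Wf, ΔW]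
    rw [hg, nLIFSpikeTime, ← hN1, ← hM1, Real.log_div hNpos.ne' hMpos.ne']
  calc |nLIFSpikeTime τ θ a - nLIFSpikeTime τ θ b|
      = ‖g 1 - g 0‖ := by rw [hg0, hg1, Real.norm_eq_abs, abs_sub_comm]
    _ ≤ C * (1 - 0) := hMVT
    _ = C := by ring
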